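/- In the SED game, suppose 0 < B_e ≤ t_w^all and π_w ≤ B_a for all w ∈ W, and W is nonempty. Then for every x ∈ [0,1]^W, the attacker's optimal value satisfies IntVal(x) = max_{w ∈ W} κ_w(1−x_w)·B_e. (This is the key fact behind Corollary 1: with a small effort budget, the attacker's best response concentrates all scanning effort on a single website.) -/
import Mathlib


open Finset

/-- Feasibility of an (integral) attacker strategy `(y, e)` in the SED game:
`y ∈ {0,1}^W`, `e ≥ 0`, effort budget `Bₑ`, attack budget `Bₐ`, and `e_w ≤ t_w^all · y_w`. -/
def AttFeas {W : Type*} [Fintype W] (tall pii : W → ℝ) (Ba Be : ℝ) (y e : W → ℝ) : Prop :=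
  (∀ w, y w = 0 ∨ y w = 1) ∧ (∀ w, 0 ≤ e w) ∧
    (∑ w, e w ≤ Be) ∧ (∑ w, pii w * y w ≤ Ba) ∧ ∀ w, e w ≤ tall w * y w

/-- Feasibility for the fractional relaxation: `y ∈ [0,1]^W`. -/
def FracFeas {W : Type*} [Fintype W] (tall pii : W → ℝ) (Ba Be : ℝ) (y e : W → ℝ) : Prop :=
  (∀ w, y w ∈ Set.Icc (0:ℝ) 1) ∧ (∀ w, 0 ≤ e w) ∧
    (∑ w, e w ≤ Be) ∧ (∑ w, pii w * y w ≤ Ba) ∧ ∀ w, e w ≤ tall w * y w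

/-- Payoff `f(x,e) = ∑_w κ_w (1 - x_w) e_w`, where `κ_w = t_w / t_w^all`. -/
noncomputable def payoff {W : Type*} [Fintype W] (t tall x e : W → ℝ) : ℝ :=
  ∑ w, (t w / tall w) * (1 - x w) * e w

/-- `IntVal x`: the attacker's optimal value against defender strategy `x`. -/
noncomputable def IntVal {W : Type*} [Fintype W] (t tall pii : W → ℝ) (Ba Be : ℝ)
    (x : W → ℝ) : ℝ :=
  sSup {v | ∃ y e, AttFeas tall pii Ba Be y e ∧ v = payoff t tall x e}

/-- `FracVal x`: the attacker's optimal value in the fractional relaxation. -/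
noncomputable def FracVal {W : Type*} [Fintype W] (t tall pii : W → ℝ) (Ba Be : ℝ)
    (x : W → ℝ) : ℝ :=
  sSup {v | ∃ y e, FracFeas tall pii Ba Be y e ∧ v = payoff t tall x e}

/-- Feasible defender strategies: `x ∈ [0,1]^W` with `∑_w c_w t_w x_w ≤ B_d`. -/
def DefFeas {W : Type*} [Fintype W] (t c : W → ℝ) (Bd : ℝ) (x : W → ℝ) : Prop :=
  (∀ w, x w ∈ Set.Icc (0:ℝ) 1) ∧ ∑ w, c w * t w * x w ≤ Bd

/-- behind Corollary 1: with a small effort budget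
`0 < B_e ≤ t_w^all` for all `w` (and every website affordable, `π_w ≤ B_a`),
the attacker's optimal value is `max_w κ_w (1 - x_w) B_e`. -/
theorem small_effort_budget_value
    {W : Type*} [Fintype W] [Nonempty W] (t tall c pii : W → ℝ) (Bd Ba Be : ℝ)
    (ht : ∀ w, 0 < t w) (htall : ∀ w, t w ≤ tall w)
    (hc : ∀ w, 0 < c w) (hpii : ∀ w, 0 < pii w)
    (hBd : 0 ≤ Bd) (hBa : 0 ≤ Ba)
    (hBe : 0 < Be) (hBe' : ∀ w, Be ≤ tall w) (haff : ∀ w, pii w ≤ Ba)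
    (x : W → ℝ) (hx : ∀ w, x w ∈ Set.Icc (0:ℝ) 1) :
    IntVal t tall pii Ba Be x =
      Finset.univ.sup' Finset.univ_nonempty
        (fun w => (t w / tall w) * (1 - x w) * Be) := by

  classical
  set M := Finset.univ.sup' Finset.univ_nonempty
      (fun w => (t w / tall w) * (1 - x w) * Be) with hMdef
  have htall0 : ∀ w, 0 < tall w := fun w => lt_of_lt_of_le (ht w) (htall w)
  have hcoef : ∀ w, 0 ≤ (t w / tall w) * (1 - x w) := fun w =>
    mul_nonneg (div_nonneg (ht w).le (htall0 w).le) (by linarith [(hx w).2])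
  obtain ⟨w0, -, hw0⟩ := Finset.exists_mem_eq_sup' (Finset.univ_nonempty (α := W))
      (fun w => (t w / tall w) * (1 - x w) * Be)
  have hMnn : 0 ≤ M := by
    rw [hMdef, hw0]; exact mul_nonneg (hcoef w0) hBe.le
  have hle : ∀ w, (t w / tall w) * (1 - x w) * Be ≤ M := by
    intro w; rw [hMdef]; exact Finset.le_sup' (fun w => (t w / tall w) * (1 - x w) * Be) (Finset.mem_univ w)
  -- membership: the concentrated strategy achieves M
  have hmem : M ∈ {v | ∃ y e, AttFeas tall pii Ba Be y e ∧ v = payoff t tall x e} := by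
    refine ⟨fun w => if w = w0 then 1 else 0, fun w => if w = w0 then Be else 0,
      ⟨fun w => by by_cases h : w = w0 <;> simp [h],
       fun w => by by_cases h : w = w0 <;> simp [h, hBe.le],
       ?_, ?_, fun w => ?_⟩, ?_⟩
    · simp
    · have : (∑ w, pii w * if w = w0 then 1 else 0) = pii w0 := by
        rw [Finset.sum_congr rfl (fun w _ => by
          rw [mul_ite, mul_one, mul_zero]), Finset.sum_ite_eq' Finset.univ w0 pii]
        simp
      rw [this]; exact haff w0
    · by_cases h : w = w0
      · simp [h]; linarith [hBe' w0]
      · simp [h]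
    · unfold payoff
      rw [Finset.sum_congr rfl (fun w _ => by
        rw [mul_ite, mul_zero] :
          ∀ w ∈ Finset.univ, ((t w / tall w) * (1 - x w) * if w = w0 then Be else 0)
            = if w = w0 then (t w / tall w) * (1 - x w) * Be else 0),
        Finset.sum_ite_eq' Finset.univ w0]
      simp [hMdef, hw0]
  -- upper bound
  have hub : ∀ v ∈ {v | ∃ y e, AttFeas tall pii Ba Be y e ∧ v = payoff t tall x e}, v ≤ M := by
    rintro v ⟨y, e, ⟨hy01, he0, heB, -, -⟩, rfl⟩
    have step : ∀ w, (t w / tall w) * (1 - x w) * e w ≤ (M / Be) * e w := by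
      intro w
      apply mul_le_mul_of_nonneg_right _ (he0 w)
      rw [le_div_iff₀ hBe]
      exact hle w
    calc payoff t tall x e ≤ ∑ w, (M / Be) * e w :=
          Finset.sum_le_sum (fun w _ => step w)
      _ = (M / Be) * ∑ w, e w := by rw [Finset.mul_sum]
      _ ≤ (M / Be) * Be := by
          apply mul_le_mul_of_nonneg_left heB (div_nonneg hMnn hBe.le)
      _ = M := div_mul_cancel₀ M hBe.ne'
  exact le_antisymm (csSup_le ⟨M, hmem⟩ hub) (le_csSup ⟨M, hub⟩ hmem)
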